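/- For reals a, b, c with quantities as below: if cosh d₁ = cosh ρ₁ cosh ρ₂ cosh h_Λ − sinh ρ₁ sinh ρ₂ and cosh d₂ = cosh ρ₁ cosh ρ₂ cosh h₀ − sinh ρ₁ sinh ρ₂ with h_Λ, h₀ > 0 and (1/K) ≤ (cosh h_Λ − 1)/(cosh h₀ − 1) ≤ K for some K > 1, then |d₁ − d₂| ≤ arccosh K and (1/K) ≤ d₁/d₂ ≤ K, where d₁, d₂ > 0. -/
import Mathlib


noncomputable def arcosh (x : ℝ) : ℝ := Real.log (x + Real.sqrt (x ^ 2 - 1))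

private lemma exp_aux (K t : ℝ) (hK : 1 ≤ K) :
    K * Real.exp t ≤ Real.exp (K * t) + (K - 1) := by
  have hK0 : (0:ℝ) < K := by linarith
  have h := convexOn_exp.2 (Set.mem_univ (K * t)) (Set.mem_univ (0:ℝ))
    (by positivity : (0:ℝ) ≤ 1 / K)
    (by rw [sub_nonneg, div_le_one hK0]; linarith : (0:ℝ) ≤ 1 - 1 / K)
    (by ring)
  simp only [smul_eq_mul, mul_zero, add_zero, Real.exp_zero] at h
  have ht : (1 / K) * (K * t) = t := by field_simp
  rw [ht] at h
  have h' := mul_le_mul_of_nonneg_left h (le_of_lt hK0)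
  have e : K * (1 / K * Real.exp (K * t) + (1 - 1 / K) * 1)
      = Real.exp (K * t) + (K - 1) := by field_simp
  linarith [e ▸ h']

private lemma cosh_mul_ge (K u : ℝ) (hK : 1 ≤ K) :
    K * (Real.cosh u - 1) ≤ Real.cosh (K * u) - 1 := by
  have h1 := exp_aux K u hK
  have h2 := exp_aux K (-u) hK
  rw [mul_neg] at h2
  rw [Real.cosh_eq, Real.cosh_eq]
  nlinarith

private lemma cosh_arcosh {x : ℝ} (hx : 1 ≤ x) : Real.cosh (arcosh x) = x := by
  have hx2 : (0:ℝ) ≤ x ^ 2 - 1 := by nlinarith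
  have hs : Real.sqrt (x ^ 2 - 1) ^ 2 = x ^ 2 - 1 := Real.sq_sqrt hx2
  have hs0 : 0 ≤ Real.sqrt (x ^ 2 - 1) := Real.sqrt_nonneg _
  have hy : (0:ℝ) < x + Real.sqrt (x ^ 2 - 1) := by linarith
  rw [arcosh, Real.cosh_eq, Real.exp_log hy, Real.exp_neg, Real.exp_log hy]
  rw [div_eq_iff (two_ne_zero)]
  field_simp
  nlinarith

private lemma arcosh_nonneg {x : ℝ} (hx : 1 ≤ x) : 0 ≤ arcosh x := by
  apply Real.log_nonneg
  have := Real.sqrt_nonneg (x ^ 2 - 1)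
  linarith

private lemma le_of_cosh_le {a b : ℝ} (ha : 0 ≤ a) (hb : 0 ≤ b)
    (h : Real.cosh a ≤ Real.cosh b) : a ≤ b := by
  have := Real.cosh_le_cosh.1 h
  rwa [abs_of_nonneg ha, abs_of_nonneg hb] at this

set_option maxHeartbeats 1000000 in
theorem stmt_11 (ρ₁ ρ₂ hΛ h₀ K d₁ d₂ : ℝ) (hhΛ : 0 < hΛ) (hh₀ : 0 < h₀)
    (hK : 1 < K)
    (hd₁ : d₁ = arcosh
      (Real.cosh ρ₁ * Real.cosh ρ₂ * Real.cosh hΛ - Real.sinh ρ₁ * Real.sinh ρ₂))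
    (hd₂ : d₂ = arcosh
      (Real.cosh ρ₁ * Real.cosh ρ₂ * Real.cosh h₀ - Real.sinh ρ₁ * Real.sinh ρ₂))
    (h1 : 1 / K ≤ (Real.cosh hΛ - 1) / (Real.cosh h₀ - 1))
    (h2 : (Real.cosh hΛ - 1) / (Real.cosh h₀ - 1) ≤ K) :
    |d₁ - d₂| ≤ arcosh K ∧ 1 / K ≤ d₁ / d₂ ∧ d₁ / d₂ ≤ K := by
  have hK0 : (0:ℝ) < K := by linarith
  set C := Real.cosh ρ₁ * Real.cosh ρ₂ with hCdef
  set S := Real.sinh ρ₁ * Real.sinh ρ₂ with hSdef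
  set x₁ := C * Real.cosh hΛ - S with hx₁
  set x₂ := C * Real.cosh h₀ - S with hx₂
  have hA : C - S = Real.cosh (ρ₁ - ρ₂) := (Real.cosh_sub ρ₁ ρ₂).symm
  have hA1 : (1:ℝ) ≤ C - S := by rw [hA]; exact Real.one_le_cosh _
  have hC1 : (1:ℝ) ≤ C := by
    nlinarith [Real.one_le_cosh ρ₁, Real.one_le_cosh ρ₂]
  have hC0 : (0:ℝ) ≤ C := by linarith
  have ht₁ : 0 < Real.cosh hΛ - 1 := by
    have := Real.one_lt_cosh.2 (ne_of_gt hhΛ); linarith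
  have ht₂ : 0 < Real.cosh h₀ - 1 := by
    have := Real.one_lt_cosh.2 (ne_of_gt hh₀); linarith
  -- inequalities between t₁ and t₂
  have hT1 : Real.cosh hΛ - 1 ≤ K * (Real.cosh h₀ - 1) := by
    rw [div_le_iff₀ ht₂] at h2; linarith
  have hT2 : Real.cosh h₀ - 1 ≤ K * (Real.cosh hΛ - 1) := by
    rw [le_div_iff₀ ht₂] at h1
    have h1' := mul_le_mul_of_nonneg_left h1 (le_of_lt hK0)
    have e : K * (1 / K * (Real.cosh h₀ - 1)) = Real.cosh h₀ - 1 := by field_simp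
    linarith [e ▸ h1']
  have hCT1 : C * (Real.cosh hΛ - 1) ≤ C * (K * (Real.cosh h₀ - 1)) :=
    mul_le_mul_of_nonneg_left hT1 hC0
  have hCT2 : C * (Real.cosh h₀ - 1) ≤ C * (K * (Real.cosh hΛ - 1)) :=
    mul_le_mul_of_nonneg_left hT2 hC0
  have hb : (0:ℝ) ≤ (K - 1) * (C - S - 1) :=
    mul_nonneg (by linarith) (by linarith)
  -- x₁, x₂ > 1
  have hx₁1 : (1:ℝ) < x₁ := by
    have hpos : 0 < C * (Real.cosh hΛ - 1) := by nlinarith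
    rw [hx₁]; nlinarith
  have hx₂1 : (1:ℝ) < x₂ := by
    have hpos : 0 < C * (Real.cosh h₀ - 1) := by nlinarith
    rw [hx₂]; nlinarith
  have hcd₁ : Real.cosh d₁ = x₁ := by rw [hd₁]; exact cosh_arcosh hx₁1.le
  have hcd₂ : Real.cosh d₂ = x₂ := by rw [hd₂]; exact cosh_arcosh hx₂1.le
  have hd₁0 : 0 ≤ d₁ := hd₁ ▸ arcosh_nonneg hx₁1.le
  have hd₂0 : 0 ≤ d₂ := hd₂ ▸ arcosh_nonneg hx₂1.le
  have hd₂pos : 0 < d₂ := by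
    rcases hd₂0.eq_or_lt with h | h
    · exfalso; rw [← h, Real.cosh_zero] at hcd₂; linarith
    · exact h
  have hd₁pos : 0 < d₁ := by
    rcases hd₁0.eq_or_lt with h | h
    · exfalso; rw [← h, Real.cosh_zero] at hcd₁; linarith
    · exact h
  set k := arcosh K with hk
  have hck : Real.cosh k = K := cosh_arcosh hK.le
  have hk0 : 0 ≤ k := arcosh_nonneg hK.le
  -- key comparisons of x₁, x₂
  have key1 : x₁ ≤ K * x₂ := by rw [hx₁, hx₂]; linarith [hCT1, hb]
  have key2 : x₂ ≤ K * x₁ := by rw [hx₁, hx₂]; linarith [hCT2, hb]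
  -- d₁ ≤ d₂ + k and d₂ ≤ d₁ + k
  have hskd₂ : 0 ≤ Real.sinh d₂ * Real.sinh k :=
    mul_nonneg (Real.sinh_nonneg_iff.2 hd₂0) (Real.sinh_nonneg_iff.2 hk0)
  have hskd₁ : 0 ≤ Real.sinh d₁ * Real.sinh k :=
    mul_nonneg (Real.sinh_nonneg_iff.2 hd₁0) (Real.sinh_nonneg_iff.2 hk0)
  have A1 : d₁ ≤ d₂ + k := by
    apply le_of_cosh_le hd₁0 (by linarith)
    rw [Real.cosh_add, hcd₁, hcd₂, hck]
    linarith [key1, hskd₂]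
  have A2 : d₂ ≤ d₁ + k := by
    apply le_of_cosh_le hd₂0 (by linarith)
    rw [Real.cosh_add, hcd₁, hcd₂, hck]
    linarith [key2, hskd₁]
  -- d₁ ≤ K d₂ and d₂ ≤ K d₁
  have B1 : d₁ ≤ K * d₂ := by
    apply le_of_cosh_le hd₁0 (by positivity)
    have hmul := cosh_mul_ge K d₂ hK.le
    rw [hcd₂] at hmul
    rw [hcd₁, hx₁]
    rw [hx₂] at hmul
    linarith [hmul, hCT1, hb]
  have B2 : d₂ ≤ K * d₁ := by
    apply le_of_cosh_le hd₂0 (by positivity)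
    have hmul := cosh_mul_ge K d₁ hK.le
    rw [hcd₁] at hmul
    rw [hcd₂, hx₂]
    rw [hx₁] at hmul
    linarith [hmul, hCT2, hb]
  refine ⟨?_, ?_, ?_⟩
  · rw [abs_sub_le_iff]; constructor <;> linarith
  · rw [le_div_iff₀ hd₂pos, div_mul_eq_mul_div, div_le_iff₀ hK0]; linarith [B2]
  · rw [div_le_iff₀ hd₂pos]; linarith [B1]
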